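/- With g_-, g_0, g_1 as above, the second Tanaka prolongation g_2, consisting of degree-2 derivation maps d : g_- → g_0 ⊕ g_1 (d(g_{-2}) ⊆ g_0, d(g_{-1}) ⊆ g_1) satisfying d([y,z]) = [d(y),z] + [y,d(z)], is exactly 1-dimensional, spanned by x8: (x1 ↦ −x4, x2 ↦ −x6, x3 ↦ −x7). Moreover the third prolongation g_3 vanishes. -/

import Mathlib

/-- The Heisenberg Lie algebra `g_- = ℝx1 ⊕ ℝx2 ⊕ ℝx3` with `[x2,x3] = 4x1`. -/
def hBracket (u v : Fin 3 → ℝ) : Fin 3 → ℝ :=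
  ![4 * (u 1 * v 2 - u 2 * v 1), 0, 0]

/-- Endomorphisms of `g_-` (candidates for elements of `g_0`). -/
abbrev W3 := (Fin 3 → ℝ) →ₗ[ℝ] (Fin 3 → ℝ)

/-- Degree-one maps `g_- → g_{-1} ⊕ g_0` (candidates for elements of `g_1`). -/
abbrev P1 := (Fin 3 → ℝ) →ₗ[ℝ] ((Fin 3 → ℝ) × W3)

/-- Degree-two maps `g_- → g_0 ⊕ g_1` (candidates for elements of `g_2`). -/
abbrev P2 := (Fin 3 → ℝ) →ₗ[ℝ] (W3 × P1)

/-- `x4 : x1 ↦ −2x1, x2 ↦ −x2, x3 ↦ −x3` spanning `g_0` with `x5`. -/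
noncomputable def X4 : W3 := Matrix.toLin' !![(-2 : ℝ), 0, 0; 0, -1, 0; 0, 0, -1]

/-- `x5 : x1 ↦ 0, x2 ↦ −x3, x3 ↦ x2` spanning `g_0` with `x4`. -/
noncomputable def X5 : W3 := Matrix.toLin' !![(0 : ℝ), 0, 0; 0, 0, 1; 0, -1, 0]

/-- `x6 : x1 ↦ −x2, x2 ↦ −6x5, x3 ↦ 2x4` spanning `g_1` with `x7`. -/
noncomputable def X6 : P1 :=
  LinearMap.prod (Matrix.toLin' !![(0 : ℝ), 0, 0; -1, 0, 0; 0, 0, 0])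
    (((LinearMap.proj 1 : (Fin 3 → ℝ) →ₗ[ℝ] ℝ).smulRight ((-6 : ℝ) • X5)) +
      ((LinearMap.proj 2 : (Fin 3 → ℝ) →ₗ[ℝ] ℝ).smulRight ((2 : ℝ) • X4)))

/-- `x7 : x1 ↦ −x3, x2 ↦ −2x4, x3 ↦ −6x5` spanning `g_1` with `x6`. -/
noncomputable def X7 : P1 :=
  LinearMap.prod (Matrix.toLin' !![(0 : ℝ), 0, 0; 0, 0, 0; -1, 0, 0])
    (((LinearMap.proj 1 : (Fin 3 → ℝ) →ₗ[ℝ] ℝ).smulRight ((-2 : ℝ) • X4)) +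
      ((LinearMap.proj 2 : (Fin 3 → ℝ) →ₗ[ℝ] ℝ).smulRight ((-6 : ℝ) • X5)))

/-- `x8 : x1 ↦ −x4, x2 ↦ −x6, x3 ↦ −x7`, as a degree-two map `g_- → g_0 ⊕ g_1`. -/
noncomputable def X8 : P2 :=
  LinearMap.prod
    (((LinearMap.proj 0 : (Fin 3 → ℝ) →ₗ[ℝ] ℝ).smulRight (-X4)))
    (((LinearMap.proj 1 : (Fin 3 → ℝ) →ₗ[ℝ] ℝ).smulRight (-X6)) +
      ((LinearMap.proj 2 : (Fin 3 → ℝ) →ₗ[ℝ] ℝ).smulRight (-X7)))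

lemma X4_apply (v : Fin 3 → ℝ) : X4 v = ![-2 * v 0, -v 1, -v 2] := by
  funext i
  fin_cases i <;>
    simp [X4, Matrix.toLin'_apply, Matrix.mulVec, dotProduct, Fin.sum_univ_three] <;> ring

lemma X5_apply (v : Fin 3 → ℝ) : X5 v = ![0, v 2, -v 1] := by
  funext i
  fin_cases i <;>
    simp [X5, Matrix.toLin'_apply, Matrix.mulVec, dotProduct, Fin.sum_univ_three] <;> ring

lemma X6_apply (v : Fin 3 → ℝ) :
    X6 v = (![0, -v 0, 0], (2 * v 2) • X4 + (-6 * v 1) • X5) := by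
  refine Prod.ext ?_ ?_
  · show Matrix.toLin' _ v = _
    funext i
    fin_cases i <;>
      simp [Matrix.toLin'_apply, Matrix.mulVec, dotProduct, Fin.sum_univ_three] <;> ring
  · show v 1 • ((-6 : ℝ) • X5) + v 2 • ((2 : ℝ) • X4) = _
    rw [smul_smul, smul_smul]
    module

lemma X7_apply (v : Fin 3 → ℝ) :
    X7 v = (![0, 0, -v 0], (-2 * v 1) • X4 + (-6 * v 2) • X5) := by
  refine Prod.ext ?_ ?_
  · show Matrix.toLin' _ v = _
    funext i
    fin_cases i <;>
      simp [Matrix.toLin'_apply, Matrix.mulVec, dotProduct, Fin.sum_univ_three] <;> ring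
  · show v 1 • ((-2 : ℝ) • X4) + v 2 • ((-6 : ℝ) • X5) = _
    rw [smul_smul, smul_smul]
    module

lemma X8_apply (v : Fin 3 → ℝ) :
    X8 v = ((-v 0) • X4, (-v 1) • X6 + (-v 2) • X7) := by
  refine Prod.ext ?_ ?_
  · show v 0 • (-X4) = _
    module
  · show v 1 • (-X6) + v 2 • (-X7) = _
    module

lemma X45_eq {α β α' β' : ℝ} (h : α • X4 + β • X5 = α' • X4 + β' • X5) :
    α = α' ∧ β = β' := by
  have h1 := congrFun (LinearMap.ext_iff.mp h ![0, 1, 0]) 1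
  have h2 := congrFun (LinearMap.ext_iff.mp h ![0, 1, 0]) 2
  simp [X4_apply, X5_apply] at h1 h2
  constructor <;> linarith

lemma X67_eq {α β α' β' : ℝ} (h : α • X6 + β • X7 = α' • X6 + β' • X7) :
    α = α' ∧ β = β' := by
  have h1 := congrFun (congrArg Prod.fst (LinearMap.ext_iff.mp h ![1, 0, 0])) 1
  have h2 := congrFun (congrArg Prod.fst (LinearMap.ext_iff.mp h ![1, 0, 0])) 2
  simp [X6_apply, X7_apply] at h1 h2
  constructor <;> linarith

lemma vec_decomp (v : Fin 3 → ℝ) :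
    v = v 0 • ![(1:ℝ),0,0] + v 1 • ![(0:ℝ),1,0] + v 2 • ![(0:ℝ),0,1] := by
  funext i; fin_cases i <;> simp

lemma lin_ext {M : Type*} [AddCommGroup M] [Module ℝ M]
    {f g : (Fin 3 → ℝ) →ₗ[ℝ] M}
    (h0 : f ![1,0,0] = g ![1,0,0]) (h1 : f ![0,1,0] = g ![0,1,0])
    (h2 : f ![0,0,1] = g ![0,0,1]) : f = g := by
  refine LinearMap.ext fun v => ?_
  rw [vec_decomp v, map_add, map_add, map_smul, map_smul, map_smul,
    map_add, map_add, map_smul, map_smul, map_smul, h0, h1, h2]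

lemma smulX8_apply (c : ℝ) (v : Fin 3 → ℝ) :
    (c • X8) v = ((-(c * v 0)) • X4, (-(c * v 1)) • X6 + (-(c * v 2)) • X7) := by
  rw [LinearMap.smul_apply, X8_apply]
  refine Prod.ext ?_ ?_ <;> simp [smul_smul, smul_add] <;> module

lemma hBracket_e12 : hBracket ![0,1,0] ![0,0,1] = (4:ℝ) • ![(1:ℝ),0,0] := by
  funext i; fin_cases i <;> simp [hBracket]

lemma reverse_dir (c : ℝ) :
    (∀ v : Fin 3 → ℝ, v 1 = 0 ∧ v 2 = 0 →
        ((c • X8) v).2 = 0 ∧ ∃ a b : ℝ, ((c • X8) v).1 = a • X4 + b • X5) ∧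
    (∀ v : Fin 3 → ℝ, v 0 = 0 →
        ((c • X8) v).1 = 0 ∧ ∃ a b : ℝ, ((c • X8) v).2 = a • X6 + b • X7) ∧
    (∀ y z : Fin 3 → ℝ,
      (0 : Fin 3 → ℝ) = ((c • X8) y).1 z + (((c • X8) y).2 z).1
          - ((c • X8) z).1 y - (((c • X8) z).2 y).1 ∧
      ((c • X8) (hBracket y z)).1 = (((c • X8) y).2 z).2 - (((c • X8) z).2 y).2 ∧
      ((c • X8) (hBracket y z)).2 = 0) := by
  refine ⟨fun v hv => ?_, fun v hv => ?_, fun y z => ⟨?_, ?_, ?_⟩⟩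
  · rw [smulX8_apply]
    refine ⟨by simp [hv.1, hv.2], -(c * v 0), 0, by simp⟩
  · rw [smulX8_apply]
    exact ⟨by simp [hv], -(c * v 1), -(c * v 2), rfl⟩
  · simp only [LinearMap.smul_apply, X8_apply, X6_apply, X7_apply, LinearMap.add_apply,
      Prod.fst_add, Prod.smul_fst, Prod.snd_add, Prod.smul_snd, X4_apply]
    funext i; fin_cases i <;> simp <;> ring
  · simp only [LinearMap.smul_apply, X8_apply, X6_apply, X7_apply, LinearMap.add_apply,
      Prod.fst_add, Prod.smul_fst, Prod.snd_add, Prod.smul_snd, hBracket,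
      Matrix.cons_val_zero]
    module
  · simp only [LinearMap.smul_apply, X8_apply, hBracket, Matrix.cons_val_one, Matrix.head_cons]
    simp

lemma forward_dir (D : P2)
    (h1 : ∀ v : Fin 3 → ℝ, v 1 = 0 ∧ v 2 = 0 →
        (D v).2 = 0 ∧ ∃ a b : ℝ, (D v).1 = a • X4 + b • X5)
    (h2 : ∀ v : Fin 3 → ℝ, v 0 = 0 →
        (D v).1 = 0 ∧ ∃ a b : ℝ, (D v).2 = a • X6 + b • X7)
    (h3 : ∀ y z : Fin 3 → ℝ,
       (0 : Fin 3 → ℝ) = (D y).1 z + ((D y).2 z).1 - (D z).1 y - ((D z).2 y).1 ∧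
       (D (hBracket y z)).1 = ((D y).2 z).2 - ((D z).2 y).2 ∧
       (D (hBracket y z)).2 = 0) :
    ∃ a : ℝ, D = a • X8 := by
  obtain ⟨hD0b, a, b, hD0⟩ := h1 ![1,0,0] ⟨by norm_num, by norm_num [Matrix.cons_val_two]⟩
  obtain ⟨hD1a, p, q, hD1⟩ := h2 ![0,1,0] (by norm_num)
  obtain ⟨hD2a, r, s, hD2⟩ := h2 ![0,0,1] (by norm_num)
  -- from h3 e0 e1, first equation: p = a, q = b
  have e01 := (h3 ![1,0,0] ![0,1,0]).1
  rw [hD0, hD0b, hD1a, hD1] at e01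
  have c1 := congrFun e01 1
  have c2 := congrFun e01 2
  simp [X4_apply, X5_apply, X6_apply, X7_apply] at c1 c2
  -- from h3 e0 e2, first equation: r = -b, s = a
  have e02 := (h3 ![1,0,0] ![0,0,1]).1
  rw [hD0, hD0b, hD2a, hD2] at e02
  have c3 := congrFun e02 1
  have c4 := congrFun e02 2
  simp [X4_apply, X5_apply, X6_apply, X7_apply] at c3 c4
  -- from h3 e1 e2, second equation: 4a = 2p + 2s, 4b = 6r - 6q
  have e12 := (h3 ![0,1,0] ![0,0,1]).2.1
  rw [hBracket_e12, map_smul, hD1, hD2] at e12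
  have c5 := congrFun (LinearMap.ext_iff.mp e12 ![0,1,0]) 1
  have c6 := congrFun (LinearMap.ext_iff.mp e12 ![0,1,0]) 2
  simp [X4_apply, X5_apply, X6_apply, X7_apply, hD0, Prod.smul_fst] at c5 c6
  have hp : p = a := by linarith
  have hq : q = b := by linarith
  have hr : r = -b := by linarith
  have hs : s = a := by linarith
  have hb : b = 0 := by linarith
  refine ⟨-a, ?_⟩
  refine lin_ext (M := W3 × P1) ?_ ?_ ?_
  · rw [smulX8_apply]
    refine Prod.ext ?_ ?_
    · rw [hD0, hb]; simp
    · rw [hD0b]; simp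
  · rw [smulX8_apply]
    refine Prod.ext ?_ ?_
    · rw [hD1a]; simp
    · rw [hD1, hp, hq, hb]; simp
  · rw [smulX8_apply]
    refine Prod.ext ?_ ?_
    · rw [hD2a]; simp
    · rw [hD2, hr, hs, hb]; simp

lemma X8_ne_zero : X8 ≠ 0 := by
  intro h
  have h0 : ((X8 ![(1:ℝ),0,0]).1 ![1,0,0]) 0 = 0 := by rw [h]; simp
  rw [X8_apply] at h0
  simp [X4_apply] at h0

set_option maxHeartbeats 1000000 in
lemma g3_vanishes (E : (Fin 3 → ℝ) →ₗ[ℝ] (P1 × P2))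
    (h1 : ∀ v : Fin 3 → ℝ, v 1 = 0 ∧ v 2 = 0 →
        (E v).2 = 0 ∧ ∃ a b : ℝ, (E v).1 = a • X6 + b • X7)
    (h2 : ∀ v : Fin 3 → ℝ, v 0 = 0 →
        (E v).1 = 0 ∧ ∃ a : ℝ, (E v).2 = a • X8)
    (h3 : ∀ y z : Fin 3 → ℝ,
       (0 : Fin 3 → ℝ) = ((E y).1 z).1 - ((E z).1 y).1 ∧
       (0 : W3) = ((E y).1 z).2 + ((E y).2 z).1 - ((E z).1 y).2 - ((E z).2 y).1 ∧
       (E (hBracket y z)).1 = ((E y).2 z).2 - ((E z).2 y).2 ∧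
       (E (hBracket y z)).2 = 0) :
    E = 0 := by
  obtain ⟨hE0b, c, d, hE0⟩ := h1 ![1,0,0] ⟨by norm_num, by norm_num [Matrix.cons_val_two]⟩
  obtain ⟨hE1a, a1, hE1⟩ := h2 ![0,1,0] (by norm_num)
  obtain ⟨hE2a, a2, hE2⟩ := h2 ![0,0,1] (by norm_num)
  have e01 := (h3 ![1,0,0] ![0,1,0]).2.1
  rw [hE0, hE0b, hE1a, hE1] at e01
  have c1 := congrFun (LinearMap.ext_iff.mp e01 ![0,1,0]) 1
  have c2 := congrFun (LinearMap.ext_iff.mp e01 ![0,1,0]) 2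
  simp [X4_apply, X5_apply, X6_apply, X7_apply, X8_apply] at c1 c2
  have e02 := (h3 ![1,0,0] ![0,0,1]).2.1
  rw [hE0, hE0b, hE2a, hE2] at e02
  have c3 := congrFun (LinearMap.ext_iff.mp e02 ![0,1,0]) 1
  have c4 := congrFun (LinearMap.ext_iff.mp e02 ![0,1,0]) 2
  simp [X4_apply, X5_apply, X6_apply, X7_apply, X8_apply] at c3 c4
  have hc : c = 0 := by linarith
  have hd : d = 0 := by linarith
  have ha1 : a1 = 0 := by linarith
  have ha2 : a2 = 0 := by linarith
  have Z0 : E ![1,0,0] = 0 := by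
    refine Prod.ext ?_ ?_
    · rw [hE0, hc, hd]; simp
    · rw [hE0b]; rfl
  have Z1 : E ![0,1,0] = 0 := by
    refine Prod.ext ?_ ?_
    · rw [hE1a]; rfl
    · rw [hE1, ha1]; simp
  have Z2 : E ![0,0,1] = 0 := by
    refine Prod.ext ?_ ?_
    · rw [hE2a]; rfl
    · rw [hE2, ha2]; simp
  refine LinearMap.ext fun v => ?_
  rw [vec_decomp v, map_add, map_add, map_smul, map_smul, map_smul, Z0, Z1, Z2]
  rw [smul_zero, smul_zero, smul_zero, add_zero, add_zero]
  rfl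

/-- The second Tanaka prolongation `g_2` of the Heisenberg algebra,
consisting of degree-two maps `d : g_- → g_0 ⊕ g_1` (with `d(g_{-2}) ⊆ g_0`,
`d(g_{-1}) ⊆ g_1`) satisfying the derivation property `d([y,z]) = [d(y),z] + [y,d(z)]`
(written out componentwise in the graded prolongation), is exactly 1-dimensional,
spanned by `x8`.  Moreover the third prolongation `g_3` vanishes. -/
theorem tanaka_g2_and_g3 :
    ((∀ D : P2,
      ((∀ v : Fin 3 → ℝ, v 1 = 0 ∧ v 2 = 0 →
          (D v).2 = 0 ∧ ∃ a b : ℝ, (D v).1 = a • X4 + b • X5) ∧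
       (∀ v : Fin 3 → ℝ, v 0 = 0 →
          (D v).1 = 0 ∧ ∃ a b : ℝ, (D v).2 = a • X6 + b • X7) ∧
       (∀ y z : Fin 3 → ℝ,
         (0 : Fin 3 → ℝ) = (D y).1 z + ((D y).2 z).1 - (D z).1 y - ((D z).2 y).1 ∧
         (D (hBracket y z)).1 = ((D y).2 z).2 - ((D z).2 y).2 ∧
         (D (hBracket y z)).2 = 0))
      ↔ ∃ a : ℝ, D = a • X8) ∧ X8 ≠ 0) ∧
    (∀ E : (Fin 3 → ℝ) →ₗ[ℝ] (P1 × P2),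
      ((∀ v : Fin 3 → ℝ, v 1 = 0 ∧ v 2 = 0 →
          (E v).2 = 0 ∧ ∃ a b : ℝ, (E v).1 = a • X6 + b • X7) ∧
       (∀ v : Fin 3 → ℝ, v 0 = 0 →
          (E v).1 = 0 ∧ ∃ a : ℝ, (E v).2 = a • X8) ∧
       (∀ y z : Fin 3 → ℝ,
         (0 : Fin 3 → ℝ) = ((E y).1 z).1 - ((E z).1 y).1 ∧
         (0 : W3) = ((E y).1 z).2 + ((E y).2 z).1 - ((E z).1 y).2 - ((E z).2 y).1 ∧
         (E (hBracket y z)).1 = ((E y).2 z).2 - ((E z).2 y).2 ∧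
         (E (hBracket y z)).2 = 0))
      → E = 0) := by
  refine ⟨⟨fun D => ⟨fun h => forward_dir D h.1 h.2.1 h.2.2, ?_⟩, X8_ne_zero⟩,
    fun E hE => g3_vanishes E hE.1 hE.2.1 hE.2.2⟩
  rintro ⟨a, rfl⟩
  exact reverse_dir a
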